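/- Let p be a prime, k ≥ 1, and γ a complex primitive p^k-th root of unity. Let M be a complex matrix all of whose entries lie in {0, 1, γ, γ^2, ..., γ^(p^k−1)}. Define M|_{γ=1} to be the matrix over 𝔽_p with entry 0 where M has entry 0 and entry 1 otherwise. Then rank_ℂ(M) ≥ rank_{𝔽_p}(M|_{γ=1}). -/

import Mathlib

open Matrix Module Submodule Polynomial

section Helpers

variable {K : Type*} [Field K]

/-- If some `r`-indexed subfamily of the columns of `A` is linearly independent,
then `r ≤ A.rank`. -/
lemma aux_rank_ge_of_cols_indep {m n r : Type*} [Fintype m] [Fintype n] [Fintype r]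
    (A : Matrix m n K) (g : r → n) (h : LinearIndependent K (fun i => Aᵀ (g i))) :
    Fintype.card r ≤ A.rank := by
  rw [Matrix.rank_eq_finrank_span_cols]
  have h1 : Fintype.card r = finrank K (span K (Set.range (fun i => Aᵀ (g i)))) :=
    (finrank_span_eq_card h).symm
  rw [h1]
  exact Submodule.finrank_mono (span_mono (Set.range_comp_subset_range g Aᵀ))

/-- Any `r ≤ A.rank` many linearly independent columns can be found. -/
lemma aux_exists_indep_cols {m n : Type*} [Fintype m] [Fintype n]
    (A : Matrix m n K) (r : ℕ) (hr : r ≤ A.rank) :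
    ∃ g : Fin r → n, LinearIndependent K (fun i => Aᵀ (g i)) := by
  obtain ⟨b, hbsub, hspan, hindep⟩ := exists_linearIndependent K (Set.range Aᵀ)
  have hbfin : b.Finite := (Set.finite_range Aᵀ).subset hbsub
  haveI := hbfin.fintype
  have hcard : A.rank = Fintype.card b := by
    rw [Matrix.rank_eq_finrank_span_cols]
    change finrank K (span K (Set.range Aᵀ)) = _
    rw [← hspan, finrank_span_set_eq_card hindep,
      Set.toFinset_card]
  obtain ⟨e, he⟩ : ∃ e : Fin A.rank → b, Function.Injective e := by
    have : r ≤ Fintype.card b := by omega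
    exact ⟨fun i => (Fintype.equivFin b).symm (Fin.castLE hcard.le i),
      fun a b hab => by
        simpa using (Fintype.equivFin _).symm.injective hab⟩
  -- use injectivity: compose castLE with e
  let e' : Fin r → b := fun i => e (Fin.castLE hr i)
  have he' : Function.Injective e' := fun a b hab => by
    have := he hab; exact Fin.castLE_injective hr this
  refine ⟨fun i => (hbsub (e' i).2).choose, ?_⟩
  have hval : (fun i => Aᵀ ((hbsub (e' i).2).choose)) = fun i => ((e' i : m → K)) := by
    funext i
    exact (hbsub (e' i).2).choose_spec
  rw [hval]
  exact hindep.comp e' he'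

/-- Selecting rows does not increase rank. -/
lemma aux_rank_submatrix_row_le {l m n : Type*} [Fintype l] [Fintype m] [Fintype n]
    (A : Matrix m n K) (f : l → m) :
    (A.submatrix f id).rank ≤ A.rank := by
  have h : (A.submatrix f (Equiv.refl n)).mulVecLin =
      LinearMap.funLeft K K f ∘ₗ A.mulVecLin ∘ₗ LinearMap.funLeft K K (Equiv.refl n).symm :=
    Matrix.mulVecLin_submatrix _ _ _
  have hid : A.submatrix f (Equiv.refl n) = A.submatrix f id := rfl
  rw [Matrix.rank, Matrix.rank, ← hid, h]
  have h2 : LinearMap.funLeft K K ((Equiv.refl n).symm : n → n) = LinearMap.id := by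
    ext v i; rfl
  rw [h2, LinearMap.comp_id, LinearMap.range_comp]
  exact Submodule.finrank_map_le _ _

/-- Selecting columns does not increase rank. -/
lemma aux_rank_submatrix_col_le {m n o : Type*} [Fintype m] [Fintype n] [Fintype o]
    (A : Matrix m n K) (g : o → n) :
    (A.submatrix id g).rank ≤ A.rank := by
  rw [Matrix.rank_eq_finrank_span_cols, Matrix.rank_eq_finrank_span_cols]
  refine Submodule.finrank_mono (span_mono ?_)
  rintro _ ⟨j, rfl⟩
  exact ⟨g j, rfl⟩

/-- A square matrix of full rank over a field is a unit. -/
lemma aux_isUnit_of_rank_eq_card {n : Type*} [Fintype n] [DecidableEq n]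
    (A : Matrix n n K) (h : A.rank = Fintype.card n) : IsUnit A := by
  rw [← Matrix.mulVec_injective_iff_isUnit]
  have hsurj : Function.Surjective A.mulVecLin := by
    rw [← LinearMap.range_eq_top]
    apply Submodule.eq_top_of_finrank_eq
    rw [← Matrix.rank, h, finrank_pi]
  exact LinearMap.injective_iff_surjective.mpr hsurj

end Helpers

theorem stmt1 (p k m n : ℕ) (hp : p.Prime) (hk : 1 ≤ k) (γ : ℂ)
    (hγ : IsPrimitiveRoot γ (p ^ k))
    (M : Matrix (Fin m) (Fin n) ℂ)
    (hM : ∀ i j, M i j = 0 ∨ ∃ e < p ^ k, M i j = γ ^ e)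
    (M' : Matrix (Fin m) (Fin n) (ZMod p))
    (hM' : ∀ i j, M' i j = if M i j = 0 then 0 else 1) :
    M'.rank ≤ M.rank := by
  haveI : Fact p.Prime := ⟨hp⟩
  have hpkpos : 0 < p ^ k := pow_pos hp.pos k
  have hγne : γ ≠ 0 := hγ.ne_zero hpkpos.ne'
  set r := M'.rank with hr
  -- pick r independent columns of M'
  obtain ⟨g, hg⟩ := aux_exists_indep_cols M' r le_rfl
  -- the m × r column-submatrix has rank r, so its transpose does too
  have hC : r ≤ ((M'.submatrix id g)ᵀ).rank := by
    rw [Matrix.rank_transpose]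
    have := aux_rank_ge_of_cols_indep (M'.submatrix id g) id (by exact hg)
    simpa using this
  -- pick r independent columns of the transpose, i.e. r independent rows
  obtain ⟨f, hf⟩ := aux_exists_indep_cols ((M'.submatrix id g)ᵀ) r hC
  -- the r × r submatrix S' of M' is invertible
  have hS : r ≤ ((M'.submatrix f g)ᵀ).rank := by
    have := aux_rank_ge_of_cols_indep ((M'.submatrix f g)ᵀ) id (by exact hf)
    simpa using this
  have hSrank : (M'.submatrix f g).rank = r := by
    refine le_antisymm ?_ ?_
    · simpa using (M'.submatrix f g).rank_le_card_width
    · rwa [← Matrix.rank_transpose]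
  have hSunit : IsUnit (M'.submatrix f g) :=
    aux_isUnit_of_rank_eq_card _ (by simpa using hSrank)
  have hSdet : (M'.submatrix f g).det ≠ 0 :=
    ((Matrix.isUnit_iff_isUnit_det _).mp hSunit).ne_zero
  -- lift to ℤ[X]
  set ψ : ℤ[X] →+* ZMod p := (Int.castRingHom (ZMod p)).comp (Polynomial.evalRingHom 1) with hψ
  set φ : ℤ[X] →+* ℂ := Polynomial.eval₂RingHom (Int.castRingHom ℂ) γ with hφ
  set N : Matrix (Fin r) (Fin r) ℤ[X] := Matrix.of fun i j =>
    if h : ∃ e, e < p ^ k ∧ M (f i) (g j) = γ ^ e then X ^ h.choose else 0 with hN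
  have hNφ : N.map φ = M.submatrix f g := by
    ext i j
    simp only [Matrix.map_apply, hN, Matrix.of_apply, Matrix.submatrix_apply]
    split
    · next h =>
      rw [map_pow]
      have hx : φ X = γ := by simp [hφ]
      rw [hx, ← h.choose_spec.2]
    · next h =>
      rcases hM (f i) (g j) with h0 | ⟨e, he, heq⟩
      · simp [h0]
      · exact absurd ⟨e, he, heq⟩ h
  have hNψ : N.map ψ = M'.submatrix f g := by
    ext i j
    simp only [Matrix.map_apply, hN, Matrix.of_apply, Matrix.submatrix_apply]
    split
    · next h =>
      have hMne : M (f i) (g j) ≠ 0 := by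
        rw [h.choose_spec.2]; exact pow_ne_zero _ hγne
      rw [hM' (f i) (g j), if_neg hMne, map_pow]
      have : ψ X = 1 := by simp [hψ]
      rw [this, one_pow]
    · next h =>
      rcases hM (f i) (g j) with h0 | ⟨e, he, heq⟩
      · rw [hM' (f i) (g j), if_pos h0, map_zero]
      · exact absurd ⟨e, he, heq⟩ h
  -- key: det of the complex submatrix is nonzero
  have hTdet : (M.submatrix f g).det ≠ 0 := by
    intro h0
    have hφdet : φ N.det = 0 := by rw [RingHom.map_det, RingHom.mapMatrix_apply, hNφ]; exact h0
    have haev : Polynomial.aeval γ N.det = 0 := by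
      rw [Polynomial.aeval_def, ← Polynomial.coe_eval₂RingHom]
      rw [show algebraMap ℤ ℂ = Int.castRingHom ℂ from rfl]
      exact hφdet
    have hdvd : minpoly ℤ γ ∣ N.det :=
      minpoly.isIntegrallyClosed_dvd (hγ.isIntegral hpkpos) haev
    rw [← Polynomial.cyclotomic_eq_minpoly hγ hpkpos] at hdvd
    obtain ⟨q, hq⟩ := hdvd
    have hψcyc : ψ (Polynomial.cyclotomic (p ^ k) ℤ) = 0 := by
      obtain ⟨k', rfl⟩ : ∃ k', k = k' + 1 := ⟨k - 1, by omega⟩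
      simp only [hψ, RingHom.comp_apply, Polynomial.coe_evalRingHom]
      rw [Polynomial.eval_one_cyclotomic_prime_pow]
      simp [ZMod.intCast_zmod_eq_zero_iff_dvd]
    have : ψ N.det = 0 := by rw [hq, _root_.map_mul ψ _ _, hψcyc, zero_mul]
    rw [RingHom.map_det, RingHom.mapMatrix_apply, hNψ] at this
    exact hSdet this
  -- conclude
  have hTunit : IsUnit (M.submatrix f g) :=
    (Matrix.isUnit_iff_isUnit_det _).mpr (isUnit_iff_ne_zero.mpr hTdet)
  have hTrank : (M.submatrix f g).rank = r := by
    rw [Matrix.rank_of_isUnit _ hTunit, Fintype.card_fin]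
  calc r = (M.submatrix f g).rank := hTrank.symm
    _ = ((M.submatrix f id).submatrix id g).rank := by rw [Matrix.submatrix_submatrix]; rfl
    _ ≤ (M.submatrix f id).rank := aux_rank_submatrix_col_le _ _
    _ ≤ M.rank := aux_rank_submatrix_row_le _ _
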